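/- Let D be a finite multiset of n real numbers, let t be a positive integer with t ≤ n, let w ≥ 1 and r > 0 be reals, and let c ∈ ℝ. Suppose that (i) the closed interval [c − r, c + r] contains at least one element of D, and (ii) every closed interval containing at least t elements of D (with multiplicity) has length at least 2r/w. Then there exists j ∈ {0, 1, …, ⌈2w⌉} such that the point e_j = c − r + j·(r/w) is an interior point of D, i.e., min D ≤ e_j ≤ max D. -/

import Mathlib

open Classical in
/-- Number of elements of the multiset `D` (with multiplicity) lying in `[a, b]`. -/
noncomputable def cntIn (D : Multiset ℝ) (a b : ℝ) : ℕ :=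
  Multiset.card (D.filter fun x => a ≤ x ∧ x ≤ b)

theorem grid_point_is_interior (D : Multiset ℝ) (n : ℕ) (hn : Multiset.card D = n)
    (t : ℕ) (ht : 1 ≤ t) (htn : t ≤ n)
    (w r : ℝ) (hw : 1 ≤ w) (hr : 0 < r) (c : ℝ)
    (h1 : ∃ x ∈ D, c - r ≤ x ∧ x ≤ c + r)
    (h2 : ∀ a b : ℝ, a ≤ b → t ≤ cntIn D a b → 2 * r / w ≤ b - a) :
    ∃ j : ℕ, j ≤ ⌈2 * w⌉₊ ∧
      sInf {x : ℝ | x ∈ D} ≤ c - r + (j : ℝ) * (r / w) ∧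
      c - r + (j : ℝ) * (r / w) ≤ sSup {x : ℝ | x ∈ D} := by
  obtain ⟨x, hxD, hx1, hx2⟩ := h1
  set S : Set ℝ := {x : ℝ | x ∈ D} with hSdef
  have hSfin : S.Finite := by
    have : S ⊆ ↑D.toFinset := by
      intro y hy; exact Multiset.mem_toFinset.2 hy
    exact Set.Finite.subset (D.toFinset.finite_toSet) this
  have hSne : S.Nonempty := ⟨x, hxD⟩
  set m := sInf S with hm
  set M := sSup S with hM
  have hmem_le : ∀ y ∈ S, m ≤ y := fun y hy => csInf_le hSfin.bddBelow hy
  have hle_mem : ∀ y ∈ S, y ≤ M := fun y hy => le_csSup hSfin.bddAbove hy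
  have hmx : m ≤ x := hmem_le x hxD
  have hxM : x ≤ M := hle_mem x hxD
  have hmM : m ≤ M := hmx.trans hxM
  have hw0 : (0:ℝ) < w := lt_of_lt_of_le one_pos hw
  have hs : (0:ℝ) < r / w := div_pos hr hw0
  -- The whole multiset lies in [m, M]
  have hcnt : cntIn D m M = n := by
    rw [cntIn, Multiset.filter_eq_self.2, hn]
    intro y hy
    exact ⟨hmem_le y hy, hle_mem y hy⟩
  have hgap : 2 * (r / w) ≤ M - m := by
    have := h2 m M hmM (by rw [hcnt]; exact htn)
    linarith [this, (by ring : 2 * r / w = 2 * (r / w))]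
  by_cases hcase : m ≤ c - r
  · refine ⟨0, Nat.zero_le _, ?_, ?_⟩
    · simpa using hcase
    · have : c - r ≤ M := le_trans hx1 hxM
      simpa using this
  · push_neg at hcase
    set d : ℝ := m - (c - r) with hd
    have hd0 : 0 < d := by simp only [hd]; linarith
    set j : ℕ := ⌈d / (r / w)⌉₊ with hj
    refine ⟨j, ?_, ?_, ?_⟩
    · apply Nat.ceil_le_ceil
      have hmcr : m ≤ c + r := hmx.trans hx2
      have : d ≤ 2 * r := by simp only [hd]; linarith
      rw [div_le_iff₀ hs]
      calc d ≤ 2 * r := this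
        _ = 2 * w * (r / w) := by field_simp
    · have h1' : d / (r / w) ≤ (j : ℝ) := Nat.le_ceil _
      have : d ≤ (j : ℝ) * (r / w) := by
        rw [div_le_iff₀ hs] at h1'; exact h1'
      simp only [hd] at this; linarith
    · have h2' : (j : ℝ) < d / (r / w) + 1 :=
        Nat.ceil_lt_add_one (le_of_lt (div_pos hd0 hs))
      have : (j : ℝ) * (r / w) < d + (r / w) := by
        have := mul_lt_mul_of_pos_right h2' hs
        rwa [add_mul, div_mul_cancel₀ _ (ne_of_gt hs), one_mul] at this
      simp only [hd] at this
      linarith [hgap, hs]
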